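/- For every δ ∈ (0, ∞) and nonzero integer n, define 𝔥(δ, n) := 6δ²n² Σ_{k=1}^∞ 1/(k²π²(k²π² + δ²n²)). Then n²·𝔥(δ,n) = n² − 3𝔏_δ(n) with 𝔏_δ(n) as in the Mittag-Leffler representation, 𝔥(δ,n) ∈ (0, 1], the series Σ_{n∈ℤ∖{0}} 𝔥(δ,n)² diverges, and 𝔥(δ,n) → 0 as δ → 0 for each fixed n. -/

import Mathlib

open Real Filter

/-- `𝔥(δ, n) := 6δ²n² Σ_{k=1}^∞ 1/(k²π²(k²π² + δ²n²))`. -/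
noncomputable def hDev (δ : ℝ) (n : ℤ) : ℝ :=
  6 * δ ^ 2 * (n : ℝ) ^ 2 *
    ∑' k : ℕ, 1 / (((k : ℝ) + 1) ^ 2 * π ^ 2 * (((k : ℝ) + 1) ^ 2 * π ^ 2 + δ ^ 2 * (n : ℝ) ^ 2))

private noncomputable def aa (k : ℕ) : ℝ := ((k : ℝ) + 1) ^ 2 * π ^ 2

private lemma aa_pos (k : ℕ) : 0 < aa k := by
  unfold aa; positivity

private lemma aa_ge_one (k : ℕ) : 1 ≤ aa k := by
  unfold aa
  have h1 : (1:ℝ) ≤ ((k:ℝ)+1)^2 := by nlinarith [Nat.cast_nonneg (α := ℝ) k]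
  nlinarith [Real.pi_gt_three]

private lemma basel : HasSum (fun k : ℕ => 1 / aa k) (1/6) := by
  have h := hasSum_zeta_two
  rw [← hasSum_nat_add_iff' 1] at h
  simp at h
  have h2 := h.div_const (π ^ 2)
  have hπ : (π:ℝ) ^ 2 ≠ 0 := by positivity
  have : π ^ 2 / 6 / π ^ 2 = 1/6 := by field_simp
  rw [this] at h2
  convert h2 using 2 with k
  · rfl
  unfold aa
  rw [one_div, mul_inv, div_eq_mul_inv]

private lemma summable_basel : Summable (fun k : ℕ => 1 / aa k) := basel.summable

private lemma tsum_basel : ∑' k : ℕ, 1 / aa k = 1/6 := basel.tsum_eq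

private lemma summable_S {c : ℝ} (hc : 0 ≤ c) : Summable (fun k : ℕ => 1 / (aa k + c)) := by
  apply Summable.of_nonneg_of_le (fun k => by have := aa_pos k; positivity) (fun k => ?_) summable_basel
  apply one_div_le_one_div_of_le (aa_pos k)
  linarith

private lemma summable_T {c : ℝ} (hc : 0 ≤ c) :
    Summable (fun k : ℕ => 1 / (aa k * (aa k + c))) := by
  apply Summable.of_nonneg_of_le (fun k => by
      have := aa_pos k; positivity) (fun k => ?_) summable_basel
  apply one_div_le_one_div_of_le (aa_pos k)
  nlinarith [aa_pos k, aa_ge_one k]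

private lemma hDev_def (δ : ℝ) (n : ℤ) :
    hDev δ n = 6 * δ ^ 2 * (n : ℝ) ^ 2 *
      ∑' k : ℕ, 1 / (aa k * (aa k + δ ^ 2 * (n : ℝ) ^ 2)) := rfl

private lemma hDev_eq {δ : ℝ} (hδ : 0 < δ) {n : ℤ} (hn : n ≠ 0) :
    hDev δ n = 1 - 6 * ∑' k : ℕ, 1 / (aa k + δ ^ 2 * (n : ℝ) ^ 2) := by
  set c : ℝ := δ ^ 2 * (n : ℝ) ^ 2 with hcdef
  have hn' : (n : ℝ) ≠ 0 := Int.cast_ne_zero.mpr hn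
  have hc : 0 < c := by positivity
  have hpf : ∀ k : ℕ, 1 / (aa k * (aa k + c)) = (1 / aa k - 1 / (aa k + c)) / c := by
    intro k
    have h1 := aa_pos k
    field_simp
    ring
  rw [hDev_def, tsum_congr hpf, tsum_div_const,
    Summable.tsum_sub summable_basel (summable_S hc.le), tsum_basel]
  field_simp
  ring

private lemma hDev_pos {δ : ℝ} (hδ : 0 < δ) {n : ℤ} (hn : n ≠ 0) : 0 < hDev δ n := by
  have hn' : (n : ℝ) ≠ 0 := Int.cast_ne_zero.mpr hn
  have hc : (0:ℝ) < δ ^ 2 * (n : ℝ) ^ 2 := by positivity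
  rw [hDev_def]
  have hT : 0 < ∑' k : ℕ, 1 / (aa k * (aa k + δ ^ 2 * (n : ℝ) ^ 2)) := by
    apply Summable.tsum_pos (summable_T hc.le) (fun k => by have := aa_pos k; positivity) 0
    have := aa_pos 0; positivity
  positivity

private lemma S_mono {δ : ℝ} (hδ : 0 < δ) {n : ℤ} (hn : n ≠ 0) :
    ∑' k : ℕ, 1 / (aa k + δ ^ 2 * (n : ℝ) ^ 2) ≤ ∑' k : ℕ, 1 / (aa k + δ ^ 2 * 1) := by
  have hn1 : (1:ℝ) ≤ (n : ℝ) ^ 2 := by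
    have : (1:ℤ) ≤ n ^ 2 := by rcases lt_or_gt_of_ne hn with h|h <;> nlinarith
    exact_mod_cast this
  apply Summable.tsum_le_tsum (fun k => ?_) (summable_S (by positivity)) (summable_S (by positivity))
  apply one_div_le_one_div_of_le (by have := aa_pos k; positivity)
  nlinarith [aa_pos k, sq_nonneg δ]

/-- For every `δ ∈ (0,∞)` and nonzero integer `n`: `n²·𝔥(δ,n) = n² − 3𝔏_δ(n)` (with `𝔏_δ(n)`
given by its Mittag-Leffler representation), `𝔥(δ,n) ∈ (0,1]`, the series
`Σ_{n ≠ 0} 𝔥(δ,n)²` diverges, and `𝔥(δ,n) → 0` as `δ → 0` for each fixed `n`. -/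
theorem stmt4 (δ : ℝ) (hδ : 0 < δ) :
    (∀ n : ℤ, n ≠ 0 →
      (n : ℝ) ^ 2 * hDev δ n =
        (n : ℝ) ^ 2 - 3 * (2 * (n : ℝ) ^ 2 *
          ∑' k : ℕ, 1 / (((k : ℝ) + 1) ^ 2 * π ^ 2 + δ ^ 2 * (n : ℝ) ^ 2))) ∧
    (∀ n : ℤ, n ≠ 0 → hDev δ n ∈ Set.Ioc (0 : ℝ) 1) ∧
    ¬ Summable (fun n : {m : ℤ // m ≠ 0} => hDev δ (n : ℤ) ^ 2) ∧
    (∀ n : ℤ, n ≠ 0 →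
      Tendsto (fun d : ℝ => hDev d n) (nhdsWithin 0 (Set.Ioi 0)) (nhds 0)) := by
  refine ⟨fun n hn => ?_, fun n hn => ?_, ?_, fun n hn => ?_⟩
  · rw [hDev_eq hδ hn]
    unfold aa
    ring
  · refine ⟨hDev_pos hδ hn, ?_⟩
    rw [hDev_eq hδ hn]
    have hS : 0 ≤ ∑' k : ℕ, 1 / (aa k + δ ^ 2 * (n : ℝ) ^ 2) :=
      tsum_nonneg fun k => by have := aa_pos k; positivity
    linarith
  · intro hsum
    have hone : (1:ℤ) ≠ 0 := one_ne_zero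
    have hlb : ∀ m : {m : ℤ // m ≠ 0}, hDev δ 1 ^ 2 ≤ hDev δ (m : ℤ) ^ 2 := by
      intro m
      have h1 : hDev δ 1 ≤ hDev δ (m : ℤ) := by
        rw [hDev_eq hδ hone, hDev_eq hδ m.2]
        have := S_mono hδ m.2
        simp only [Int.cast_one, one_pow] at *
        linarith
      have h0 : 0 < hDev δ 1 := hDev_pos hδ hone
      nlinarith
    have hε : 0 < hDev δ 1 ^ 2 := pow_pos (hDev_pos hδ hone) 2
    have : Infinite {m : ℤ // m ≠ 0} :=
      Infinite.of_injective (fun k : ℕ => (⟨(k:ℤ) + 1, by omega⟩ : {m : ℤ // m ≠ 0}))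
        (fun a b h => by
          have h2 : (a:ℤ) + 1 = (b:ℤ) + 1 := congrArg Subtype.val h
          omega)
    have htend := hsum.tendsto_cofinite_zero
    have := (htend.eventually (eventually_lt_nhds hε)).exists
    obtain ⟨m, hm⟩ := this
    exact absurd (hlb m) (not_le.mpr hm)
  · have hn' : (n : ℝ) ≠ 0 := Int.cast_ne_zero.mpr hn
    set C : ℝ := ∑' k : ℕ, 1 / (aa k * aa k) with hC
    have hCsum : Summable (fun k : ℕ => 1 / (aa k * aa k)) := by
      simpa using summable_T (c := 0) le_rfl
    have hub : ∀ d : ℝ, 0 < d → hDev d n ≤ 6 * d ^ 2 * (n:ℝ) ^ 2 * C := by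
      intro d hd
      rw [hDev_def]
      have hTle : ∑' k : ℕ, 1 / (aa k * (aa k + d ^ 2 * (n : ℝ) ^ 2)) ≤ C := by
        apply Summable.tsum_le_tsum (fun k => ?_) (summable_T (by positivity)) hCsum
        apply one_div_le_one_div_of_le (by have := aa_pos k; positivity)
        nlinarith [aa_pos k, sq_nonneg (d * (n:ℝ))]
      have : (0:ℝ) ≤ 6 * d ^ 2 * (n:ℝ) ^ 2 := by positivity
      exact mul_le_mul_of_nonneg_left hTle this
    have hlbd : ∀ d : ℝ, 0 < d → 0 ≤ hDev d n := by
      intro d hd; exact (hDev_pos hd hn).le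
    have htop : Tendsto (fun d : ℝ => 6 * d ^ 2 * (n:ℝ) ^ 2 * C)
        (nhdsWithin 0 (Set.Ioi 0)) (nhds 0) := by
      have : Tendsto (fun d : ℝ => 6 * d ^ 2 * (n:ℝ) ^ 2 * C) (nhds 0) (nhds 0) := by
        have hcont : Continuous (fun d : ℝ => 6 * d ^ 2 * (n:ℝ) ^ 2 * C) := by continuity
        have := hcont.tendsto 0
        simpa using this
      exact this.mono_left nhdsWithin_le_nhds
    apply tendsto_of_tendsto_of_tendsto_of_le_of_le' tendsto_const_nhds htop
    · filter_upwards [self_mem_nhdsWithin] with d hd using hlbd d hd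
    · filter_upwards [self_mem_nhdsWithin] with d hd using hub d hd
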